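/- For every real z > 0, ∫₀^∞ K₀( 2z cosh(t) ) cosh(t) dt = (1/2) K_{1/2}(z)², and this common value equals (π/(4z)) e^{−2z}. -/

import Mathlib

open MeasureTheory Real

/-- Modified Bessel function of the second kind, integral representation. -/
noncomputable def besselK (ν z : ℝ) : ℝ :=
  ∫ t in Set.Ioi (0:ℝ), Real.exp (-z * Real.cosh t) * Real.cosh (ν * t)

open Set

/-- Generic substitution `x = c * sinh (a * t)` on `(0, ∞)`. -/
lemma subst_sinh {a c : ℝ} (ha : 0 < a) (hc : 0 < c) (g : ℝ → ℝ) :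
    ∫ x in Set.Ioi (0:ℝ), g x
      = ∫ t in Set.Ioi (0:ℝ), (a * c * Real.cosh (a * t)) * g (c * Real.sinh (a * t)) := by
  have hmono : StrictMono (fun t : ℝ => c * Real.sinh (a * t)) := by
    intro s t hst
    have h := Real.sinh_lt_sinh.2 (by nlinarith : a * s < a * t)
    simpa using mul_lt_mul_of_pos_left h hc
  have himg : (fun t : ℝ => c * Real.sinh (a * t)) '' Set.Ioi 0 = Set.Ioi 0 := by
    ext x
    constructor
    · rintro ⟨t, ht, rfl⟩
      have : 0 < Real.sinh (a * t) := Real.sinh_pos_iff.2 (mul_pos ha ht)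
      exact mul_pos hc this
    · intro hx
      refine ⟨Real.arsinh (x / c) / a, ?_, ?_⟩
      · have : 0 < Real.arsinh (x / c) :=
          Real.arsinh_pos_iff.2 (div_pos hx hc)
        exact div_pos this ha
      · simp only
        rw [mul_div_cancel₀ _ (ne_of_gt ha), Real.sinh_arsinh,
          mul_div_cancel₀ _ (ne_of_gt hc)]
  have hderiv : ∀ t ∈ Set.Ioi (0:ℝ),
      HasDerivWithinAt (fun t : ℝ => c * Real.sinh (a * t))
        (a * c * Real.cosh (a * t)) (Set.Ioi 0) t := by
    intro t _
    have h1 : HasDerivAt (fun t : ℝ => a * t) a t := by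
      simpa using (hasDerivAt_id t).const_mul a
    have h2 : HasDerivAt (fun t : ℝ => Real.sinh (a * t)) (Real.cosh (a * t) * a) t :=
      (Real.hasDerivAt_sinh (a * t)).comp t h1
    have h3 := h2.const_mul c
    have : c * (Real.cosh (a * t) * a) = a * c * Real.cosh (a * t) := by ring
    rw [this] at h3
    exact h3.hasDerivWithinAt
  have := integral_image_eq_integral_abs_deriv_smul measurableSet_Ioi hderiv
    hmono.injective.injOn g
  rw [himg] at this
  rw [this]
  refine setIntegral_congr_fun measurableSet_Ioi (fun t _ => ?_)
  rw [smul_eq_mul, abs_of_pos (by positivity : (0:ℝ) < a * c * Real.cosh (a * t))]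

lemma besselK_half {z : ℝ} (hz : 0 < z) :
    besselK (1/2) z = Real.exp (-z) * Real.sqrt (π / (2 * z)) := by
  have h := subst_sinh (a := 1/2) (c := 1) (by norm_num) one_pos
    (fun x => 2 * Real.exp (-z * (2 * x ^ 2 + 1)))
  have hR : (∫ t in Set.Ioi (0:ℝ),
      (1/2 * 1 * Real.cosh (1/2 * t)) * (2 * Real.exp (-z * (2 * (1 * Real.sinh (1/2 * t)) ^ 2 + 1))))
      = besselK (1/2) z := by
    unfold besselK
    refine setIntegral_congr_fun measurableSet_Ioi (fun t _ => ?_)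
    have hc : Real.cosh t = 2 * Real.sinh (1/2 * t) ^ 2 + 1 := by
      rw [show t = 2 * (1/2 * t) by ring, Real.cosh_two_mul, Real.cosh_sq]
      ring_nf
    rw [show (2 * (1 * Real.sinh (1/2 * t)) ^ 2 + 1) = Real.cosh t by rw [hc]; ring]
    ring
  have hL : (∫ x in Set.Ioi (0:ℝ), 2 * Real.exp (-z * (2 * x ^ 2 + 1)))
      = Real.exp (-z) * Real.sqrt (π / (2 * z)) := by
    have : ∀ x : ℝ, 2 * Real.exp (-z * (2 * x ^ 2 + 1))
        = (2 * Real.exp (-z)) * Real.exp (-(2*z) * x ^ 2) := by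
      intro x
      rw [mul_assoc, ← Real.exp_add]
      ring_nf
    simp_rw [this]
    rw [integral_const_mul, integral_gaussian_Ioi]
    ring
  rw [← hR, ← h, hL]

lemma sqrt_add_sq_sinh {c t : ℝ} (hc : 0 < c) :
    Real.sqrt (c ^ 2 + (c * Real.sinh t) ^ 2) = c * Real.cosh t := by
  have h : c ^ 2 + (c * Real.sinh t) ^ 2 = (c * Real.cosh t) ^ 2 := by
    have := Real.cosh_sq t
    nlinarith
  rw [h, Real.sqrt_sq (by positivity)]

lemma besselK_zero_eq {z c : ℝ} (hc : 0 < c) :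
    besselK 0 (2 * z * c)
      = ∫ y in Set.Ioi (0:ℝ),
          Real.exp (-(2*z) * Real.sqrt (c^2 + y^2)) / Real.sqrt (c^2 + y^2) := by
  have h := subst_sinh one_pos hc
    (fun y => Real.exp (-(2*z) * Real.sqrt (c^2 + y^2)) / Real.sqrt (c^2 + y^2))
  rw [h]
  unfold besselK
  refine (setIntegral_congr_fun measurableSet_Ioi (fun t _ => ?_)).symm
  simp only [one_mul]
  rw [sqrt_add_sq_sinh hc]
  have hch : 0 < c * Real.cosh t := by positivity
  field_simp
  ring_nf
  simp

lemma integrable_exp_neg_mul_abs {b : ℝ} (hb : 0 < b) :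
    Integrable (fun x : ℝ => Real.exp (-b * |x|)) := by
  have haux : IntegrableOn (fun x : ℝ => Real.exp (-b * |x|)) (Ioi 0) :=
    (exp_neg_integrableOn_Ioi 0 hb).congr_fun
      (fun x hx => by rw [abs_of_pos hx]) measurableSet_Ioi
  rw [← integrableOn_univ, ← @Iio_union_Ici _ _ (0 : ℝ), integrableOn_union,
    integrableOn_Ici_iff_integrableOn_Ioi]
  refine ⟨?_, haux⟩
  rw [← (Measure.measurePreserving_neg (volume : Measure ℝ)).integrableOn_comp_preimage
      (Homeomorph.neg ℝ).measurableEmbedding]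
  simp only [Function.comp_def, abs_neg, neg_preimage, neg_Iio, neg_zero]
  exact haux

set_option maxHeartbeats 1000000 in
theorem integral_besselK_zero_cosh (z : ℝ) (hz : 0 < z) :
    (∫ t in Set.Ioi (0:ℝ), besselK 0 (2 * z * Real.cosh t) * Real.cosh t)
        = (1 / 2) * (besselK (1/2) z) ^ 2 ∧
      (1 / 2) * (besselK (1/2) z) ^ 2 = (π / (4 * z)) * Real.exp (-2 * z) := by
  -- Part 2 first
  have hpart2 : (1 / 2) * (besselK (1/2) z) ^ 2 = (π / (4 * z)) * Real.exp (-2 * z) := by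
    rw [besselK_half hz, mul_pow, Real.sq_sqrt (by positivity : (0:ℝ) ≤ π / (2*z)),
      ← Real.exp_nat_mul]
    rw [show ((2:ℕ) : ℝ) * (-z) = -2 * z by push_cast; ring]
    field_simp
    ring
  -- the radial profile
  set h : ℝ → ℝ := fun r => Real.exp (-(2*z) * Real.sqrt (1 + r^2)) / Real.sqrt (1 + r^2) with hh
  have hcont : Continuous h := by
    apply Continuous.div
    · continuity
    · continuity
    · intro r
      positivity
  have hG : ∀ x y : ℝ, h (Real.sqrt (x^2 + y^2))
      = Real.exp (-(2*z) * Real.sqrt (1 + x^2 + y^2)) / Real.sqrt (1 + x^2 + y^2) := by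
    intro x y
    simp only [hh]
    rw [Real.sq_sqrt (by positivity : (0:ℝ) ≤ x^2 + y^2)]
    ring_nf
  -- Step A: first substitution
  have hA : (∫ t in Set.Ioi (0:ℝ), besselK 0 (2 * z * Real.cosh t) * Real.cosh t)
      = ∫ x in Set.Ioi (0:ℝ), besselK 0 (2 * z * Real.sqrt (1 + x^2)) := by
    rw [subst_sinh one_pos one_pos (fun x => besselK 0 (2 * z * Real.sqrt (1 + x^2)))]
    refine setIntegral_congr_fun measurableSet_Ioi (fun t _ => ?_)
    have h1 : Real.sqrt (1 + (1 * Real.sinh (1 * t))^2) = Real.cosh t := by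
      have := sqrt_add_sq_sinh (c := 1) (t := t) one_pos
      simpa using this
    simp only [one_mul] at h1 ⊢
    rw [h1]
    ring
  -- Step B: inner representation
  have hB : ∀ x : ℝ, besselK 0 (2 * z * Real.sqrt (1 + x^2))
      = ∫ y in Set.Ioi (0:ℝ), h (Real.sqrt (x^2 + y^2)) := by
    intro x
    have hc : (0:ℝ) < Real.sqrt (1 + x^2) := by positivity
    rw [besselK_zero_eq hc]
    refine setIntegral_congr_fun measurableSet_Ioi (fun y _ => ?_)
    rw [hG x y, Real.sq_sqrt (by positivity : (0:ℝ) ≤ 1 + x^2)]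
  -- quadrant integral
  have hquad : (∫ t in Set.Ioi (0:ℝ), besselK 0 (2 * z * Real.cosh t) * Real.cosh t)
      = ∫ x in Set.Ioi (0:ℝ), ∫ y in Set.Ioi (0:ℝ), h (Real.sqrt (x^2 + y^2)) := by
    rw [hA]
    exact setIntegral_congr_fun measurableSet_Ioi (fun x _ => hB x)
  -- integrability on the plane
  have hGcont : Continuous (fun p : ℝ × ℝ => h (Real.sqrt (p.1^2 + p.2^2))) := by
    apply hcont.comp
    continuity
  have ie : Integrable (fun x : ℝ => Real.exp (-z * |x|)) := integrable_exp_neg_mul_abs hz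
  have iG : Integrable (fun p : ℝ × ℝ => h (Real.sqrt (p.1^2 + p.2^2)))
      (volume.prod volume) := by
    rw [← Measure.volume_eq_prod]
    refine Integrable.mono' (g := fun p : ℝ × ℝ => Real.exp (-z * |p.1|) * Real.exp (-z * |p.2|))
      ?_ hGcont.aestronglyMeasurable ?_
    · rw [Measure.volume_eq_prod]; exact ie.mul_prod ie
    · refine Filter.Eventually.of_forall (fun p => ?_)
      obtain ⟨x, y⟩ := p
      simp only
      rw [hG x y, ← Real.exp_add]
      have hs1 : (1:ℝ) ≤ Real.sqrt (1 + x^2 + y^2) := by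
        have := Real.sqrt_le_sqrt (show (1:ℝ) ≤ 1 + x^2 + y^2 by nlinarith)
        rwa [Real.sqrt_one] at this
      have habs : |x| + |y| ≤ 2 * Real.sqrt (1 + x^2 + y^2) := by
        have h2 : (|x| + |y|)^2 ≤ (2 * Real.sqrt (1 + x^2 + y^2))^2 := by
          rw [mul_pow, Real.sq_sqrt (by positivity : (0:ℝ) ≤ 1 + x^2 + y^2)]
          have := abs_mul_abs_self x
          have := abs_mul_abs_self y
          nlinarith [sq_nonneg (|x| - |y|), sq_abs x, sq_abs y]
        have := abs_nonneg x
        have := abs_nonneg y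
        nlinarith [Real.sqrt_nonneg (1 + x^2 + y^2)]
      rw [Real.norm_eq_abs, abs_of_nonneg (by positivity : (0:ℝ) ≤ Real.exp (-(2*z) * Real.sqrt (1 + x^2 + y^2)) / Real.sqrt (1 + x^2 + y^2))]
      calc Real.exp (-(2*z) * Real.sqrt (1 + x^2 + y^2)) / Real.sqrt (1 + x^2 + y^2)
          ≤ Real.exp (-(2*z) * Real.sqrt (1 + x^2 + y^2)) / 1 := by
            apply div_le_div_of_nonneg_left (by positivity) one_pos hs1
        _ = Real.exp (-(2*z) * Real.sqrt (1 + x^2 + y^2)) := by rw [div_one]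
        _ ≤ Real.exp (-z * |x| + -z * |y|) := by
            apply Real.exp_le_exp.2
            nlinarith
  -- quadrant to plane
  have hplane : (∫ x in Set.Ioi (0:ℝ), ∫ y in Set.Ioi (0:ℝ), h (Real.sqrt (x^2 + y^2)))
      = (1/4) * ∫ p : ℝ × ℝ, h (Real.sqrt (p.1^2 + p.2^2)) := by
    have hy : ∀ x : ℝ, (∫ y : ℝ, h (Real.sqrt (x^2 + y^2)))
        = 2 * ∫ y in Set.Ioi (0:ℝ), h (Real.sqrt (x^2 + y^2)) := by
      intro x
      rw [← integral_comp_abs (f := fun u => h (Real.sqrt (x^2 + u^2)))]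
      congr 1
      ext y
      rw [sq_abs]
    have hx : (∫ x : ℝ, ∫ y in Set.Ioi (0:ℝ), h (Real.sqrt (x^2 + y^2)))
        = 2 * ∫ x in Set.Ioi (0:ℝ), ∫ y in Set.Ioi (0:ℝ), h (Real.sqrt (x^2 + y^2)) := by
      rw [← integral_comp_abs (f := fun u => ∫ y in Set.Ioi (0:ℝ), h (Real.sqrt (u^2 + y^2)))]
      congr 1
      ext x
      rw [sq_abs]
    have iG' : Integrable (Function.uncurry fun x y : ℝ => h (Real.sqrt (x^2 + y^2)))
        (volume.prod volume) := iG
    have hfub : (∫ p : ℝ × ℝ, h (Real.sqrt (p.1^2 + p.2^2)))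
        = ∫ x : ℝ, ∫ y : ℝ, h (Real.sqrt (x^2 + y^2)) := by
      rw [Measure.volume_eq_prod]
      exact (integral_integral iG').symm
    rw [hfub]
    have e1 : (∫ x : ℝ, ∫ y : ℝ, h (Real.sqrt (x^2 + y^2)))
        = ∫ x : ℝ, 2 * ∫ y in Set.Ioi (0:ℝ), h (Real.sqrt (x^2 + y^2)) :=
      integral_congr_ae (Filter.Eventually.of_forall (fun x => hy x))
    have e2 : (∫ x : ℝ, 2 * ∫ y in Set.Ioi (0:ℝ), h (Real.sqrt (x^2 + y^2)))
        = 2 * ∫ x : ℝ, ∫ y in Set.Ioi (0:ℝ), h (Real.sqrt (x^2 + y^2)) :=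
      integral_const_mul 2 _
    rw [e1, e2, hx]
    ring
  -- polar coordinates
  have hr_int : IntegrableOn (fun r : ℝ => r * h r) (Set.Ioi 0) := by
    refine Integrable.mono' (exp_neg_integrableOn_Ioi 0 (by positivity : (0:ℝ) < 2*z))
      (Continuous.aestronglyMeasurable (by exact continuous_id.mul hcont)) ?_
    rw [ae_restrict_iff' measurableSet_Ioi]
    refine Filter.Eventually.of_forall (fun r hr => ?_)
    have hr0 : (0:ℝ) < r := hr
    have hs : (0:ℝ) < Real.sqrt (1 + r^2) := by positivity
    have hrs : r ≤ Real.sqrt (1 + r^2) := by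
      have := Real.sqrt_le_sqrt (show r^2 ≤ 1 + r^2 by nlinarith)
      rwa [Real.sqrt_sq hr0.le] at this
    have hnn : (0:ℝ) ≤ r * h r := by
      simp only [hh]
      positivity
    rw [Real.norm_eq_abs, abs_of_nonneg hnn]
    simp only [hh]
    calc r * (Real.exp (-(2*z) * Real.sqrt (1 + r^2)) / Real.sqrt (1 + r^2))
        ≤ Real.sqrt (1 + r^2) * (Real.exp (-(2*z) * r) / Real.sqrt (1 + r^2)) := by
          apply mul_le_mul hrs ?_ (by positivity) hs.le
          exact (div_le_div_iff_of_pos_right hs).2 (Real.exp_le_exp.2 (by nlinarith))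
      _ = Real.exp (-(2*z) * r) := by field_simp
  have hpolar : (∫ p : ℝ × ℝ, h (Real.sqrt (p.1^2 + p.2^2)))
      = 2 * π * ∫ r in Set.Ioi (0:ℝ), r * h r := by
    rw [← integral_comp_polarCoord_symm (fun p : ℝ × ℝ => h (Real.sqrt (p.1^2 + p.2^2)))]
    have heq : (fun p : ℝ × ℝ => p.1 • h (Real.sqrt ((polarCoord.symm p).1^2 + (polarCoord.symm p).2^2)))
        = fun p : ℝ × ℝ => p.1 * h p.1 := by
      funext p
      rw [polarCoord_symm_apply]
      simp only [smul_eq_mul]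
      congr 1
      have h1 : (p.1 * Real.cos p.2)^2 + (p.1 * Real.sin p.2)^2 = p.1^2 := by
        nlinarith [Real.sin_sq_add_cos_sq p.2]
      rw [h1, Real.sqrt_sq_eq_abs]
      simp only [hh]
      rw [sq_abs]
    calc (∫ p in polarCoord.target,
            p.1 • h (Real.sqrt ((polarCoord.symm p).1^2 + (polarCoord.symm p).2^2)))
        = ∫ p in Set.Ioi (0:ℝ) ×ˢ Set.Ioo (-π) π, p.1 * h p.1 := by
          rw [show polarCoord.target = Set.Ioi (0:ℝ) ×ˢ Set.Ioo (-π) π from rfl]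
          rw [heq]
      _ = ∫ r in Set.Ioi (0:ℝ), ∫ θ in Set.Ioo (-π) π, r * h r := by
          rw [Measure.volume_eq_prod]
          apply setIntegral_prod
          rw [IntegrableOn, ← Measure.prod_restrict]
          have ig : Integrable (fun _ : ℝ => (1:ℝ)) (volume.restrict (Set.Ioo (-π) π)) := by
            refine integrableOn_const ?_ (by simp)
            rw [Real.volume_Ioo]
            exact ENNReal.ofReal_ne_top
          have := hr_int.mul_prod ig
          simpa using this
      _ = ∫ r in Set.Ioi (0:ℝ), (2 * π) * (r * h r) := by
          refine setIntegral_congr_fun measurableSet_Ioi (fun r _ => ?_)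
          rw [setIntegral_const, measureReal_def, Real.volume_Ioo, smul_eq_mul]
          congr 1
          rw [show π - -π = 2 * π by ring, ENNReal.toReal_ofReal (by positivity)]
      _ = 2 * π * ∫ r in Set.Ioi (0:ℝ), r * h r := integral_const_mul _ _
  -- radial integral
  have hrad : (∫ r in Set.Ioi (0:ℝ), r * h r)
      = ∫ ρ in Set.Ioi (1:ℝ), Real.exp (-(2*z) * ρ) := by
    have himg : (fun r : ℝ => Real.sqrt (1 + r^2)) '' Set.Ioi 0 = Set.Ioi 1 := by
      ext ρ
      constructor
      · rintro ⟨r, hr, rfl⟩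
        have hr0 : (0:ℝ) < r := hr
        have : Real.sqrt 1 < Real.sqrt (1 + r^2) := Real.sqrt_lt_sqrt zero_le_one (by nlinarith)
        simpa using this
      · intro hρ
        have hρ1 : (1:ℝ) < ρ := hρ
        refine ⟨Real.sqrt (ρ^2 - 1), ?_, ?_⟩
        · exact Real.sqrt_pos.2 (by nlinarith)
        · show Real.sqrt (1 + Real.sqrt (ρ^2-1) ^ 2) = ρ
          rw [Real.sq_sqrt (by nlinarith : (0:ℝ) ≤ ρ^2 - 1),
            show 1 + (ρ^2 - 1) = ρ^2 by ring, Real.sqrt_sq (by linarith)]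
    have hderiv : ∀ r ∈ Set.Ioi (0:ℝ),
        HasDerivWithinAt (fun r : ℝ => Real.sqrt (1 + r^2))
          (r / Real.sqrt (1 + r^2)) (Set.Ioi 0) r := by
      intro r _
      have hne : (1 + r^2 : ℝ) ≠ 0 := by positivity
      have h1 : HasDerivAt (fun r : ℝ => 1 + r^2) (2 * r) r := by
        simpa using (hasDerivAt_pow 2 r).const_add 1
      have h2 := (Real.hasDerivAt_sqrt hne).comp r h1
      have : 1 / (2 * Real.sqrt (1 + r^2)) * (2 * r) = r / Real.sqrt (1 + r^2) := by
        have hs : (0:ℝ) < Real.sqrt (1 + r^2) := by positivity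
        field_simp
      rw [this] at h2
      exact h2.hasDerivWithinAt
    have hinj : Set.InjOn (fun r : ℝ => Real.sqrt (1 + r^2)) (Set.Ioi 0) := by
      intro r1 h1 r2 h2 heq
      have e1 : (1:ℝ) + r1^2 = 1 + r2^2 := by
        have := congrArg (fun u => u^2) heq
        simpa [Real.sq_sqrt (by positivity : (0:ℝ) ≤ 1 + r1^2),
          Real.sq_sqrt (by positivity : (0:ℝ) ≤ 1 + r2^2)] using this
      have hr1 : (0:ℝ) < r1 := h1
      have hr2 : (0:ℝ) < r2 := h2
      nlinarith
    have := integral_image_eq_integral_abs_deriv_smul measurableSet_Ioi hderiv hinj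
      (fun ρ => Real.exp (-(2*z) * ρ))
    rw [himg] at this
    rw [this]
    refine setIntegral_congr_fun measurableSet_Ioi (fun r hr => ?_)
    have hr0 : (0:ℝ) < r := hr
    have hs : (0:ℝ) < Real.sqrt (1 + r^2) := by positivity
    rw [smul_eq_mul, abs_of_pos (by positivity : (0:ℝ) < r / Real.sqrt (1 + r^2))]
    simp only [hh]
    field_simp
  have hexp : (∫ ρ in Set.Ioi (1:ℝ), Real.exp (-(2*z) * ρ)) = Real.exp (-(2*z)) / (2*z) := by
    have h2z : (0:ℝ) < 2*z := by positivity
    have := integral_comp_mul_left_Ioi (fun x => Real.exp (-x)) 1 h2z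
    simp only [smul_eq_mul, mul_one] at this
    rw [show (fun ρ : ℝ => Real.exp (-(2*z) * ρ)) = fun ρ : ℝ => Real.exp (-(2*z*ρ)) by
      funext ρ; ring_nf, this, integral_exp_neg_Ioi]
    field_simp
  -- assemble part 1
  have hpart1 : (∫ t in Set.Ioi (0:ℝ), besselK 0 (2 * z * Real.cosh t) * Real.cosh t)
      = (π / (4 * z)) * Real.exp (-2 * z) := by
    rw [hquad, hplane, hpolar, hrad, hexp]
    rw [show -(2*z) = -2 * z by ring]
    field_simp
  exact ⟨hpart1.trans hpart2.symm, hpart2⟩
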